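/- Every rooted tree with n edges can be transformed into the star with n rays rooted at a leaf (corresponding to the Dyck word (1,1,0,1,0,…,1,0,0)) by a finite sequence of rotation and pull operations; consequently, the auxiliary graph H_n whose nodes are equivalence classes of rooted trees with n edges under rotation, with an edge for every flippable pair, is connected. -/

import Mathlib

/-- A Dyck word: equally many ones (`true`) and zeros (`false`), and
every prefix has at least as many ones as zeros. -/
def IsDyck (x : List Bool) : Prop :=
  x.count true = x.count false ∧
  ∀ k : ℕ, (x.take k).count false ≤ (x.take k).count true

/-- `DyckN n` is the set of Dyck words of length `2n`. -/
def DyckN (n : ℕ) : Set (List Bool) :=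
  {x | x.length = 2 * n ∧ IsDyck x}

/-- `(x,y)` is a flippable pair:
`x = (1,u_1,1,u_2,…,1,u_d,1,1,0,w,0,v_d,0,…,v_1,0,v_0)` and
`y = (1,u_1,1,u_2,…,1,u_d,1,0,1,w,0,v_d,0,…,v_1,0,v_0)` for some `d ≥ 0` and
Dyck words `u_1,…,u_d,v_0,…,v_d,w`.  Here `us = [u_1,…,u_d]` and
`vs = [v_d,…,v_1]` (in order of appearance). -/
def Flippable (x y : List Bool) : Prop :=
  ∃ (us vs : List (List Bool)) (w v0 : List Bool),
    us.length = vs.length ∧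
    (∀ u ∈ us, IsDyck u) ∧ (∀ v ∈ vs, IsDyck v) ∧ IsDyck w ∧ IsDyck v0 ∧
    x = (us.map (fun u => true :: u)).flatten ++ [true, true, false] ++ w ++
        [false] ++ (vs.map (fun v => v ++ [false])).flatten ++ v0 ∧
    y = (us.map (fun u => true :: u)).flatten ++ [true, false, true] ++ w ++
        [false] ++ (vs.map (fun v => v ++ [false])).flatten ++ v0

/-- The rotation operation on Dyck words: the word with canonic decomposition
`(1,u,0,v)` is mapped to `(u,1,v,0)`. -/
def Rot (x y : List Bool) : Prop :=
  ∃ u v : List Bool, IsDyck u ∧ IsDyck v ∧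
    x = true :: u ++ false :: v ∧ y = u ++ true :: v ++ [false]

/-- The star with `n` rays rooted at a leaf: the Dyck word
`(1,1,0,1,0,…,1,0,0)`. -/
def starWord (n : ℕ) : List Bool :=
  true :: (List.replicate (n - 1) [true, false]).flatten ++ [false]

namespace SP

abbrev flat (k : ℕ) : List Bool := (List.replicate k [true, false]).flatten

lemma flat_succ (k : ℕ) : flat (k+1) = [true,false] ++ flat k := by
  simp [flat, List.replicate_succ]

lemma flat_length (k : ℕ) : (flat k).length = 2*k := by
  induction k with
  | zero => simp [flat]
  | succ k ih => rw [flat_succ]; simp [ih]; omega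

lemma dyck_nil : IsDyck [] := by constructor <;> simp [IsDyck]

lemma dyck_append {u v : List Bool} (hu : IsDyck u) (hv : IsDyck v) : IsDyck (u ++ v) := by
  obtain ⟨hu1, hu2⟩ := hu
  obtain ⟨hv1, hv2⟩ := hv
  constructor
  · simp [List.count_append, hu1, hv1]
  · intro k
    rw [List.take_append]
    simp only [List.count_append]
    have := hu2 k; have := hv2 (k - u.length)
    omega

lemma dyck_nest {u : List Bool} (hu : IsDyck u) : IsDyck (true :: u ++ [false]) := by
  obtain ⟨hu1, hu2⟩ := hu
  constructor
  · simp [List.count_append, hu1]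
  · intro k
    cases k with
    | zero => simp
    | succ k =>
      rw [List.cons_append, List.take_succ_cons, List.take_append]
      have := hu2 k
      cases h : k - u.length with
      | zero => simp only [h, List.take_zero, List.append_nil, List.count_cons]
                simp; omega
      | succ j => rw [show List.take (j+1) [false] = [false] by simp]
                  simp only [List.count_cons, List.count_append]
                  simp; omega

lemma dyck_flat (k : ℕ) : IsDyck (flat k) := by
  induction k with
  | zero => exact dyck_nil
  | succ k ih => rw [flat_succ]; exact dyck_append (by exact dyck_nest dyck_nil) ih


lemma dec {x : List Bool} (hx : IsDyck x) (hne : x ≠ []) :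
    ∃ u v, IsDyck u ∧ IsDyck v ∧ x = true :: u ++ false :: v := by
  obtain ⟨hbal, hpre⟩ := hx
  -- head is true
  obtain ⟨hd, t, rfl⟩ : ∃ hd t, x = hd :: t := by
    cases x with
    | nil => exact absurd rfl hne
    | cons a l => exact ⟨a, l, rfl⟩
  have hhd : hd = true := by
    have := hpre 1
    cases hd
    · simp at this
    · rfl
  subst hhd
  -- least balanced prefix
  have hQex : ∃ k, 0 < k ∧ ((true :: t).take k).count true = ((true :: t).take k).count false := by
    refine ⟨(true :: t).length, by simp, ?_⟩
    rw [List.take_length]; exact hbal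
  classical
  set x := true :: t with hxdef
  let k0 := Nat.find hQex
  have hk0 : 0 < k0 ∧ (x.take k0).count true = (x.take k0).count false := Nat.find_spec hQex
  have hmin : ∀ m, m < k0 → ¬(0 < m ∧ (x.take m).count true = (x.take m).count false) :=
    fun m hm => Nat.find_min hQex hm
  have hk0le : k0 ≤ x.length := Nat.find_min' hQex ⟨by simp [hxdef], by rw [List.take_length]; exact hbal⟩
  have hk02 : 2 ≤ k0 := by
    rcases Nat.lt_or_ge k0 2 with h | h
    · interval_cases k0
      · exact absurd hk0.1 (by simp)
      · have := hk0.2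
        simp [hxdef] at this
    · exact h
  have hstrict : ∀ m, 0 < m → m < k0 → (x.take m).count false < (x.take m).count true := by
    intro m hm hmk
    have h1 := hpre m
    have h2 := hmin m hmk
    rw [hxdef] at *
    omega
  -- the character at position k0-1 is false
  have hlt : k0 - 1 < x.length := by omega
  have htake : x.take k0 = x.take (k0 - 1) ++ [x.get ⟨k0 - 1, hlt⟩] := by
    conv_lhs => rw [show k0 = (k0-1)+1 by omega]
    rw [List.take_succ]
    simp [List.getElem?_eq_getElem hlt]
  have hc : x.get ⟨k0 - 1, hlt⟩ = false := by
    by_contra hcf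
    have hct : x.get ⟨k0 - 1, hlt⟩ = true := by
      cases h : x.get ⟨k0 - 1, hlt⟩
      · exact absurd h hcf
      · rfl
    have hs := hstrict (k0 - 1) (by omega) (by omega)
    have := hk0.2
    rw [htake, hct] at this
    simp [List.count_append] at this
    omega
  -- define u and v
  refine ⟨t.take (k0 - 2), t.drop (k0 - 1), ?_, ?_, ?_⟩
  · -- u Dyck
    have hulen : (t.take (k0-2)).length = k0 - 2 := by
      rw [List.length_take]
      have : k0 - 2 ≤ t.length := by
        have : x.length = t.length + 1 := by simp [hxdef]
        omega
      omega
    constructor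
    · -- balance of u
      have hx0 : x.take k0 = true :: (t.take (k0-2) ++ [false]) := by
        rw [htake, hc, hxdef]
        rw [show k0 - 1 = (k0-2)+1 by omega]
        simp [List.take_succ_cons]
      have := hk0.2
      rw [hx0] at this
      simp [List.count_append] at this
      omega
    · intro j
      rcases le_or_gt j (k0-2) with hj | hj
      · have hTT : (t.take (k0-2)).take j = t.take j := by
          rw [List.take_take]; congr 1; omega
        rw [hTT]
        have := hstrict (j+1) (by omega) (by omega)
        rw [hxdef, List.take_succ_cons] at this
        simp [List.count_cons] at this
        omega
      · have hTT : (t.take (k0-2)).take j = t.take (k0-2) := by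
          apply List.take_of_length_le; omega
        rw [hTT]
        have := hstrict ((k0-2)+1) (by omega) (by omega)
        rw [hxdef, List.take_succ_cons] at this
        simp [List.count_cons] at this
        omega
  · -- v Dyck
    have hsplit : ∀ j, x.take (k0 + j) = x.take k0 ++ (t.drop (k0-1)).take j := by
      intro j
      have hdropx : x.drop k0 = t.drop (k0-1) := by
        conv_lhs => rw [hxdef, show k0 = (k0-1)+1 by omega, List.drop_succ_cons]
      rw [List.take_add, hdropx]
    constructor
    · -- balance
      have htot := hbal
      have hx' : x = x.take k0 ++ t.drop (k0-1) := by
        conv_lhs => rw [← List.take_append_drop k0 x]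
        congr 1
        conv_lhs => rw [hxdef, show k0 = (k0-1)+1 by omega, List.drop_succ_cons]
      rw [hx'] at htot
      simp [List.count_append] at htot
      have := hk0.2
      omega
    · intro j
      have h1 := hpre (k0 + j)
      rw [hsplit j] at h1
      simp [List.count_append] at h1
      have := hk0.2
      omega
  · -- decomposition equation
    have hx0 : x.take k0 = true :: (t.take (k0-2) ++ [false]) := by
      rw [htake, hc, hxdef]
      rw [show k0 - 1 = (k0-2)+1 by omega]
      simp [List.take_succ_cons]
    conv_lhs => rw [← List.take_append_drop k0 x]
    rw [hx0]
    have hdropx : x.drop k0 = t.drop (k0-1) := by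
      conv_lhs => rw [hxdef, show k0 = (k0-1)+1 by omega, List.drop_succ_cons]
    rw [hdropx]
    simp


/-- number of (1,0) inversion pairs -/
def meas : List Bool → ℕ
  | [] => 0
  | (a :: t) => (if a then t.count false else 0) + meas t

lemma meas_append (A B : List Bool) :
    meas (A ++ B) = meas A + meas B + A.count true * B.count false := by
  induction A with
  | nil => simp [meas]
  | cons a A ih =>
    simp only [List.cons_append, meas, ih, List.count_append, List.count_cons]
    cases a <;> simp <;> ring

lemma meas_flip_lt (A B : List Bool) :
    meas (A ++ [true, false, true] ++ B) < meas (A ++ [true, true, false] ++ B) := by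
  rw [List.append_assoc, List.append_assoc, meas_append, meas_append, meas_append, meas_append]
  have h1 : meas [true, false, true] = 1 := by simp [meas]
  have h2 : meas [true, true, false] = 2 := by simp [meas]
  simp [h1, h2, List.count_cons]

abbrev step (a b : List Bool) : Prop := Rot a b ∨ Flippable a b

lemma rot_phase : ∀ (K : ℕ) (u v : List Bool), u.length ≤ K → IsDyck u → IsDyck v →
    ∃ z, IsDyck z ∧ z.length = u.length + v.length ∧
      Relation.ReflTransGen step (true :: u ++ false :: v) (true :: z ++ [false]) := by
  intro K
  induction K with
  | zero =>
    intro u v hlen hu hv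
    have : u = [] := List.eq_nil_of_length_eq_zero (by omega)
    subst this
    cases v with
    | nil => exact ⟨[], dyck_nil, by simp, by simp; exact Relation.ReflTransGen.refl⟩
    | cons b v' =>
      refine ⟨b :: v', hv, by simp, ?_⟩
      refine Relation.ReflTransGen.single (Or.inl ?_)
      exact ⟨[], b :: v', dyck_nil, hv, by simp, by simp⟩
  | succ K ih =>
    intro u v hlen hu hv
    cases hveq : v with
    | nil =>
      exact ⟨u, hu, by simp, by rw [show (false :: ([] : List Bool)) = [false] from rfl]⟩
    | cons b v' =>
      rw [← hveq]
      cases hueq : u with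
      | nil =>
        refine ⟨v, hv, by simp, ?_⟩
        refine Relation.ReflTransGen.single (Or.inl ?_)
        exact ⟨[], v, dyck_nil, hv, by simp, by simp⟩
      | cons a u' =>
        rw [← hueq]
        have hune : u ≠ [] := by rw [hueq]; simp
        obtain ⟨p, q, hp, hq, hdecu⟩ := dec hu hune
        have hstep : Rot (true :: u ++ false :: v) (true :: p ++ false :: (q ++ true :: v ++ [false])) := by
          refine ⟨u, v, hu, hv, rfl, ?_⟩
          rw [hdecu]
          simp
        have hq' : IsDyck (q ++ true :: v ++ [false]) := by
          have := dyck_nest hv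
          have := dyck_append hq this
          simpa using this
        have hplen : p.length ≤ K := by
          have : u.length = p.length + q.length + 2 := by rw [hdecu]; simp; omega
          omega
        obtain ⟨z, hz, hzlen, hrtg⟩ := ih p (q ++ true :: v ++ [false]) hplen hp hq'
        refine ⟨z, hz, ?_, Relation.ReflTransGen.head (Or.inl hstep) hrtg⟩
        rw [hzlen, hdecu]
        simp
        omega


def IsFlat (v : List Bool) : Prop := ∃ k, v = flat k

lemma tf_dyck : IsDyck [true, false] := by
  have := dyck_nest dyck_nil; simpa using this

lemma key : ∀ (n : ℕ) (v : List Bool), v.length = n → IsDyck v → ¬ IsFlat v →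
    ∃ (u₁ w vlast : List Bool) (us'' vs'' : List (List Bool)) (v' : List Bool),
      IsDyck u₁ ∧ IsDyck w ∧ IsDyck vlast ∧
      (∀ u ∈ us'', IsDyck u) ∧ (∀ z ∈ vs'', IsDyck z) ∧
      us''.length = vs''.length ∧
      IsDyck v' ∧ v'.length = v.length ∧
      true :: v ++ [false] =
        (((u₁ :: us'').map (fun u => true :: u)).flatten) ++ [true, true, false] ++ w ++
          [false] ++ (((vs'' ++ [vlast]).map (fun z => z ++ [false])).flatten) ∧
      true :: v' ++ [false] =
        (((u₁ :: us'').map (fun u => true :: u)).flatten) ++ [true, false, true] ++ w ++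
          [false] ++ (((vs'' ++ [vlast]).map (fun z => z ++ [false])).flatten) := by
  intro n
  induction n using Nat.strong_induction_on with
  | _ n ih =>
    intro v hlen hv hnf
    have hvne : v ≠ [] := by
      rintro rfl
      exact hnf ⟨0, by simp [flat]⟩
    obtain ⟨a, b, ha, hb, hdec⟩ := dec hv hvne
    have hvlen : v.length = a.length + b.length + 2 := by
      rw [hdec]; simp; omega
    by_cases hae : a = []
    · -- case A : v = [true, false] ++ b
      subst hae
      have hbnf : ¬ IsFlat b := by
        rintro ⟨k, rfl⟩
        exact hnf ⟨k + 1, by rw [hdec, flat_succ]; simp⟩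
      obtain ⟨u₁, w, vlast, us'', vs'', v', hu₁, hw, hvlast, hus, hvs, hlen2, hv', hv'len,
          hxa, hya⟩ := ih b.length (by omega) b rfl hb hbnf
      refine ⟨[true, false] ++ u₁, w, vlast, us'', vs'', [true, false] ++ v',
        dyck_append tf_dyck hu₁, hw, hvlast, hus, hvs, hlen2,
        dyck_append tf_dyck hv', by simp [hdec, hv'len], ?_, ?_⟩
      · simp only [List.map_cons, List.flatten_cons, List.cons_append, List.nil_append,
          List.append_assoc, List.cons.injEq, true_and] at hxa ⊢
        rw [hdec]
        simp only [List.cons_append, List.nil_append, List.append_assoc, List.cons.injEq,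
          true_and]
        exact hxa
      · simp only [List.map_cons, List.flatten_cons, List.cons_append, List.nil_append,
          List.append_assoc, List.cons.injEq, true_and] at hya ⊢
        exact hya
    · by_cases haf : IsFlat a
      · -- case B : a = flat (k+1)
        obtain ⟨k, rfl⟩ := haf
        obtain ⟨k', rfl⟩ : ∃ k', k = k' + 1 := by
          cases k with
          | zero => exact absurd (by simp [flat]) hae
          | succ k' => exact ⟨k', rfl⟩
        refine ⟨[], flat k', b, [], [], [true, false] ++ (true :: flat k' ++ [false]) ++ b,
          dyck_nil, dyck_flat k', hb, by simp, by simp, rfl,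
          dyck_append (dyck_append tf_dyck (dyck_nest (dyck_flat k'))) hb, ?_, ?_, ?_⟩
        · rw [hdec]
          simp [flat_length]
          omega
        · rw [hdec, flat_succ]
          simp [List.append_assoc]
        · simp [List.append_assoc]
      · -- case C : recurse into a
        obtain ⟨u₁, w, vlast, us'', vs'', v', hu₁, hw, hvlast, hus, hvs, hlen2, hv', hv'len,
            hxa, hya⟩ := ih a.length (by omega) a rfl ha haf
        refine ⟨[], w, b, u₁ :: us'', vs'' ++ [vlast], (true :: v' ++ [false]) ++ b,
          dyck_nil, hw, hb, ?_, ?_, ?_,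
          dyck_append (dyck_nest hv') hb, ?_, ?_, ?_⟩
        · intro u hu
          rcases List.mem_cons.mp hu with rfl | h
          · exact hu₁
          · exact hus u h
        · intro z hz
          rcases List.mem_append.mp hz with h | h
          · exact hvs z h
          · rw [List.mem_singleton] at h; subst h; exact hvlast
        · simp [hlen2]
        · rw [hdec]; simp [hv'len]
        · -- x equation
          rw [hdec]
          simp only [List.map_cons, List.flatten_cons, List.map_append, List.flatten_append,
            List.map_nil, List.flatten_nil, List.cons_append, List.nil_append, List.append_nil,
            List.append_assoc, List.singleton_append, List.cons.injEq, true_and] at hxa ⊢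
          rw [show (a ++ false :: (b ++ [false])) = (a ++ [false]) ++ (b ++ [false]) by simp]
          rw [hxa]
          simp [List.append_assoc]
        · -- y equation
          simp only [List.map_cons, List.flatten_cons, List.map_append, List.flatten_append,
            List.map_nil, List.flatten_nil, List.cons_append, List.nil_append, List.append_nil,
            List.append_assoc, List.singleton_append, List.cons.injEq, true_and] at hya ⊢
          rw [show (v' ++ false :: (b ++ [false])) = (v' ++ [false]) ++ (b ++ [false]) by simp]
          rw [hya]
          simp [List.append_assoc]


lemma loop : ∀ (N : ℕ) (v : List Bool), IsDyck v → meas (true :: v ++ [false]) ≤ N →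
    Relation.ReflTransGen step (true :: v ++ [false]) (true :: flat (v.length / 2) ++ [false]) := by
  intro N
  induction N with
  | zero =>
    intro v hv hm
    by_cases hf : IsFlat v
    · obtain ⟨k, rfl⟩ := hf
      rw [show (flat k).length / 2 = k by rw [flat_length]; omega]
    · obtain ⟨u₁, w, vlast, us'', vs'', v', hu₁, hw, hvlast, hus, hvs, hlen2, hv', hv'len,
        hx, hy⟩ := key v.length v rfl hv hf
      exfalso
      have h1 : true :: v ++ [false] =
          (((u₁ :: us'').map (fun u => true :: u)).flatten) ++ [true, true, false] ++
            (w ++ [false] ++ (((vs'' ++ [vlast]).map (fun z => z ++ [false])).flatten)) := by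
        rw [hx]; simp [List.append_assoc]
      have := meas_flip_lt (((u₁ :: us'').map (fun u => true :: u)).flatten)
        (w ++ [false] ++ (((vs'' ++ [vlast]).map (fun z => z ++ [false])).flatten))
      rw [← h1] at this
      omega
  | succ N ihN =>
    intro v hv hm
    by_cases hf : IsFlat v
    · obtain ⟨k, rfl⟩ := hf
      rw [show (flat k).length / 2 = k by rw [flat_length]; omega]
    · obtain ⟨u₁, w, vlast, us'', vs'', v', hu₁, hw, hvlast, hus, hvs, hlen2, hv', hv'len,
        hx, hy⟩ := key v.length v rfl hv hf
      have hflip : Flippable (true :: v ++ [false]) (true :: v' ++ [false]) := by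
        refine ⟨u₁ :: us'', vs'' ++ [vlast], w, [], by simp [hlen2], ?_, ?_, hw, dyck_nil, ?_, ?_⟩
        · intro u hu
          rcases List.mem_cons.mp hu with rfl | h
          · exact hu₁
          · exact hus u h
        · intro z hz
          rcases List.mem_append.mp hz with h | h
          · exact hvs z h
          · rw [List.mem_singleton] at h; subst h; exact hvlast
        · rw [hx]; simp
        · rw [hy]; simp
      have h1 : true :: v ++ [false] =
          (((u₁ :: us'').map (fun u => true :: u)).flatten) ++ [true, true, false] ++
            (w ++ [false] ++ (((vs'' ++ [vlast]).map (fun z => z ++ [false])).flatten)) := by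
        rw [hx]; simp [List.append_assoc]
      have h2 : true :: v' ++ [false] =
          (((u₁ :: us'').map (fun u => true :: u)).flatten) ++ [true, false, true] ++
            (w ++ [false] ++ (((vs'' ++ [vlast]).map (fun z => z ++ [false])).flatten)) := by
        rw [hy]; simp [List.append_assoc]
      have hlt := meas_flip_lt (((u₁ :: us'').map (fun u => true :: u)).flatten)
        (w ++ [false] ++ (((vs'' ++ [vlast]).map (fun z => z ++ [false])).flatten))
      rw [← h1, ← h2] at hlt
      have hrec := ihN v' hv' (by omega)
      rw [hv'len] at hrec
      exact Relation.ReflTransGen.head (Or.inr hflip) hrec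

lemma reach_star {n : ℕ} (hn : 1 ≤ n) (x : List Bool) (hlen : x.length = 2 * n)
    (hx : IsDyck x) : Relation.ReflTransGen step x (starWord n) := by
  have hne : x ≠ [] := by
    intro h; rw [h] at hlen; simp at hlen; omega
  obtain ⟨u, v, hu, hv, hdec⟩ := dec hx hne
  obtain ⟨z, hz, hzlen, hrtg1⟩ := rot_phase u.length u v le_rfl hu hv
  have hzlen' : z.length = 2 * n - 2 := by
    have : x.length = u.length + v.length + 2 := by rw [hdec]; simp; omega
    omega
  have hrtg2 := loop (meas (true :: z ++ [false])) z hz le_rfl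
  have hdiv : z.length / 2 = n - 1 := by omega
  rw [hdiv] at hrtg2
  have hstar : starWord n = true :: flat (n-1) ++ [false] := rfl
  rw [hstar, hdec]
  exact hrtg1.trans hrtg2


end SP

/-- Every rooted tree with `n` edges (encoded as a Dyck word in `D_n`) can be
transformed into the star with `n` rays rooted at a leaf by a finite sequence
of rotation and pull operations; consequently the auxiliary graph `H_n` is
connected: any two Dyck words in `D_n` are joined by a finite sequence of
rotations, pulls, and their inverses. -/
theorem trees_to_star_and_H_connected (n : ℕ) (hn : 1 ≤ n) :
    (∀ x ∈ DyckN n,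
      Relation.ReflTransGen (fun a b => Rot a b ∨ Flippable a b) x (starWord n)) ∧
    (∀ x ∈ DyckN n, ∀ y ∈ DyckN n,
      Relation.ReflTransGen
        (fun a b => Rot a b ∨ Rot b a ∨ Flippable a b ∨ Flippable b a) x y) := by
  constructor
  · intro x hx
    exact SP.reach_star hn x hx.1 hx.2
  · intro x hx y hy
    have h1 := SP.reach_star hn x hx.1 hx.2
    have h2 := SP.reach_star hn y hy.1 hy.2
    have hfwd : Relation.ReflTransGen
        (fun a b => Rot a b ∨ Rot b a ∨ Flippable a b ∨ Flippable b a) x (starWord n) := by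
      refine Relation.ReflTransGen.mono ?_ _ _ h1
      intro a b hab
      rcases hab with h | h
      · exact Or.inl h
      · exact Or.inr (Or.inr (Or.inl h))
    have hrev : ∀ (a b : List Bool), Relation.ReflTransGen SP.step a b →
        Relation.ReflTransGen
          (fun a b => Rot a b ∨ Rot b a ∨ Flippable a b ∨ Flippable b a) b a := by
      intro a b hab
      induction hab with
      | refl => exact Relation.ReflTransGen.refl
      | tail hstep hlast ih =>
        refine Relation.ReflTransGen.head ?_ ih
        rcases hlast with h | h
        · exact Or.inr (Or.inl h)
        · exact Or.inr (Or.inr (Or.inr h))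
    exact hfwd.trans (hrev y (starWord n) h2)
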